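/- The Dyck path φ(P) produced from a unit interval poset P = ([n], ⪯_S) by sorting S ∪ (S+1) and recording N for elements of S and E for elements of S+1 depends only on the isomorphism class of the poset ([n], ⪯_S), not on the choice of the starting set S. -/

import Mathlib

private lemma countP_finRange_eq_card {n : ℕ} (q : Fin n → Bool) :
    (List.finRange n).countP q = (Finset.univ.filter (fun i => q i = true)).card := by
  rw [Fin.univ_def, Finset.card, Finset.filter_val]
  simp [Multiset.filter_coe, List.countP_eq_length_filter]

private lemma countP_ofFn' {n : ℕ} (f : Fin n → ℝ) (p : ℝ → Bool) :
    (List.ofFn f).countP p = (Finset.univ.filter (fun i => p (f i) = true)).card := by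
  rw [List.ofFn_eq_map, List.countP_map, countP_finRange_eq_card]
  rfl

private lemma sorted_getElem_countP {L : List ℝ} (hL : L.Pairwise (· < ·)) {v : ℝ} (hv : v ∈ L) :
    ∃ h : L.countP (fun y => decide (y < v)) < L.length,
      L[L.countP (fun y => decide (y < v))]'h = v := by
  obtain ⟨m, hm, rfl⟩ := List.mem_iff_getElem.mp hv
  obtain ⟨v, hveq⟩ : ∃ v, L[m] = v := ⟨L[m], rfl⟩
  have key : L.countP (fun y => decide (y < v)) = m := by
    conv_lhs => rw [← List.take_append_drop m L]
    rw [List.countP_append]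
    have h1 : (L.take m).countP (fun y => decide (y < v)) = (L.take m).length := by
      rw [List.countP_eq_length]
      intro a ha
      obtain ⟨i, hi, rfl⟩ := List.mem_iff_getElem.mp ha
      have hi' : i < m := lt_of_lt_of_le hi (by simp [List.length_take])
      rw [List.getElem_take]
      simp only [decide_eq_true_eq]
      rw [← hveq]
      exact hL.sortedLT.strictMono_get (show (⟨i, lt_trans hi' hm⟩ : Fin L.length) < ⟨m, hm⟩ from hi')
    have h2 : (L.drop m).countP (fun y => decide (y < v)) = 0 := by
      rw [List.countP_eq_zero]
      intro a ha
      obtain ⟨i, hi, rfl⟩ := List.mem_iff_getElem.mp ha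
      rw [List.length_drop] at hi
      rw [List.getElem_drop]
      simp only [decide_eq_true_eq, not_lt]
      rw [← hveq]
      rcases Nat.eq_zero_or_pos i with h0 | h0
      · simp [h0]
      · exact le_of_lt (hL.sortedLT.strictMono_get
          (show (⟨m, hm⟩ : Fin L.length) < ⟨m + i, by omega⟩ from by simp; omega))
    rw [h1, h2, List.length_take]
    omega
  rw [hveq, key]
  exact ⟨hm, hveq⟩

private lemma card_filter_perm {n : ℕ} (σ : Equiv.Perm (Fin n)) (p : Fin n → Prop)
    [DecidablePred p] :
    (Finset.univ.filter (fun i => p (σ i))).card = (Finset.univ.filter p).card := by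
  apply Finset.card_bij' (fun a _ => σ a) (fun a _ => σ.symm a)
  · intro a ha
    simp only [Finset.mem_filter, Finset.mem_univ, true_and] at ha ⊢
    exact ha
  · intro a ha
    simp only [Finset.mem_filter, Finset.mem_univ, true_and] at ha ⊢
    simpa using ha
  · intro a _; simp
  · intro a _; simp

private lemma antitone_perm_not_lt {n : ℕ} (f g : Fin n → ℕ) (hf : Antitone f)
    (hg : Antitone g) (σ : Equiv.Perm (Fin n)) (hfg : ∀ j, f j = g (σ j)) (j : Fin n) :
    ¬ f j < g j := by
  intro h
  have h1 : Finset.Iic j ⊆ Finset.univ.filter (fun i => g j ≤ g i) := by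
    intro i hi
    simp only [Finset.mem_Iic] at hi
    simp only [Finset.mem_filter, Finset.mem_univ, true_and]
    exact hg hi
  have h2 : Finset.univ.filter (fun i => g j ≤ f i) ⊆ Finset.Iio j := by
    intro i hi
    simp only [Finset.mem_filter, Finset.mem_univ, true_and] at hi
    simp only [Finset.mem_Iio]
    by_contra hij
    push_neg at hij
    exact absurd (lt_of_lt_of_le h hi) (not_lt.mpr (hf hij))
  have hcard : (Finset.univ.filter (fun i => g j ≤ f i)).card
      = (Finset.univ.filter (fun i => g j ≤ g i)).card := by
    simp only [hfg]
    exact card_filter_perm σ (fun i => g j ≤ g i)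
  have c1 := Finset.card_le_card h1
  have c2 := Finset.card_le_card h2
  rw [Fin.card_Iic] at c1
  rw [Fin.card_Iio] at c2
  omega

private lemma antitone_perm_eq {n : ℕ} (f g : Fin n → ℕ) (hf : Antitone f)
    (hg : Antitone g) (σ : Equiv.Perm (Fin n)) (hfg : ∀ j, f j = g (σ j)) : f = g := by
  funext j
  have h1 := antitone_perm_not_lt f g hf hg σ hfg j
  have h2 := antitone_perm_not_lt g f hg hf σ⁻¹ (fun i => by
    have := hfg (σ⁻¹ i); rw [show σ (σ⁻¹ i) = i from by simp] at this; omega) j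
  omega

private lemma countP_lt_eq {n : ℕ} (x : Fin n → ℝ) (hx : StrictMono x)
    (hdisj : ∀ i j : Fin n, x i + 1 ≠ x j) (j : Fin n) :
    (List.ofFn x ++ List.ofFn (fun i => x i + 1)).countP (fun y => decide (y < x j + 1))
      = (n - (Finset.univ.filter (fun i => x j + 1 < x i)).card) + ↑j := by
  rw [List.countP_append, countP_ofFn' x, countP_ofFn' (fun i => x i + 1)]
  have e2 : (Finset.univ.filter
      (fun i : Fin n => (fun y => decide (y < x j + 1)) ((fun i => x i + 1) i) = true))
      = Finset.Iio j := by
    ext i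
    simp [hx.lt_iff_lt]
  have e1 : (Finset.univ.filter (fun i : Fin n => (fun y => decide (y < x j + 1)) (x i) = true))
      = (Finset.univ.filter (fun i => x j + 1 < x i))ᶜ := by
    ext i
    simp only [Finset.mem_filter, Finset.mem_univ, true_and, Finset.mem_compl,
      decide_eq_true_eq]
    constructor
    · intro h hcon
      exact absurd rfl (ne_of_gt (lt_trans h hcon))
    · intro h
      rcases lt_trichotomy (x i) (x j + 1) with h' | h' | h'
      · exact h'
      · exact absurd h'.symm (hdisj j i)
      · exact absurd h' h
  rw [e1, e2, Finset.card_compl, Fin.card_Iio]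
  simp

private lemma e_pos_iff {n : ℕ} (x : Fin n → ℝ) (hx : StrictMono x)
    (hdisj : ∀ i j : Fin n, x i + 1 ≠ x j) {L : List ℝ} (hsort : L.Pairwise (· < ·))
    (hperm : L.Perm (List.ofFn x ++ List.ofFn (fun i => x i + 1)))
    {k : ℕ} (hk : k < L.length) :
    (∃ j : Fin n, x j + 1 = L[k]) ↔
      ∃ j : Fin n, k = (n - (Finset.univ.filter (fun i => x j + 1 < x i)).card) + ↑j := by
  constructor
  · rintro ⟨j, hj⟩
    refine ⟨j, ?_⟩
    have hmem : x j + 1 ∈ L := hperm.mem_iff.mpr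
      (List.mem_append.mpr (Or.inr (List.mem_ofFn.mpr ⟨j, rfl⟩)))
    obtain ⟨h0, h1⟩ := sorted_getElem_countP hsort hmem
    have hc := (hperm.countP_eq (fun y => decide (y < x j + 1))).trans
      (countP_lt_eq x hx hdisj j)
    have hkk : (⟨k, hk⟩ : Fin L.length) = ⟨_, h0⟩ :=
      hsort.sortedLT.strictMono_get.injective (by
        simp only [List.get_eq_getElem]
        rw [h1, hj])
    have : k = L.countP (fun y => decide (y < x j + 1)) := congrArg Fin.val hkk
    omega
  · rintro ⟨j, hj⟩
    refine ⟨j, ?_⟩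
    have hmem : x j + 1 ∈ L := hperm.mem_iff.mpr
      (List.mem_append.mpr (Or.inr (List.mem_ofFn.mpr ⟨j, rfl⟩)))
    obtain ⟨h0, h1⟩ := sorted_getElem_countP hsort hmem
    have hc := (hperm.countP_eq (fun y => decide (y < x j + 1))).trans
      (countP_lt_eq x hx hdisj j)
    have hkc : k = L.countP (fun y => decide (y < x j + 1)) := by omega
    subst hkc
    exact h1.symm


/-- **The Dyck path `φ(P)` only depends on the isomorphism class of the unit
interval poset `P = ([n], ⪯_S)`, not on the choice of the starting set `S`.**
Here `x, x' : Fin n → ℝ` are two increasing starting sets inducing isomorphic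
posets (via a permutation `σ`), `L, L'` are the sorted lists of `S ∪ (S+1)` and
`S' ∪ (S'+1)`, and `w, w'` the corresponding N/E words. -/
theorem phi_well_defined (n : ℕ) (x x' : Fin n → ℝ)
    (hx : StrictMono x) (hx' : StrictMono x')
    (hdisj : ∀ i j : Fin n, x i + 1 ≠ x j)
    (hdisj' : ∀ i j : Fin n, x' i + 1 ≠ x' j)
    (σ : Equiv.Perm (Fin n))
    (hiso : ∀ i j : Fin n, x i + 1 < x j ↔ x' (σ i) + 1 < x' (σ j))
    (L L' : List ℝ)
    (hsort : L.Pairwise (· < ·)) (hsort' : L'.Pairwise (· < ·))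
    (hperm : L.Perm (List.ofFn x ++ List.ofFn (fun i => x i + 1)))
    (hperm' : L'.Perm (List.ofFn x' ++ List.ofFn (fun i => x' i + 1)))
    (w w' : List Bool) (hlen : w.length = L.length) (hlen' : w'.length = L'.length)
    (hw : ∀ k < L.length, (w.getD k false = true ↔ ∃ i : Fin n, x i = L.getD k 0))
    (hw' : ∀ k < L'.length, (w'.getD k false = true ↔ ∃ i : Fin n, x' i = L'.getD k 0)) :
    w = w' := by
  have hlen2 : L.length = n + n := by simpa using hperm.length_eq
  have hlen2' : L'.length = n + n := by simpa using hperm'.length_eq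
  set U : Fin n → ℕ := fun j => (Finset.univ.filter (fun i => x j + 1 < x i)).card with hU
  set U' : Fin n → ℕ := fun j => (Finset.univ.filter (fun i => x' j + 1 < x' i)).card with hU'
  have hUanti : Antitone U := by
    intro a b hab
    apply Finset.card_le_card
    intro i hi
    simp only [Finset.mem_filter, Finset.mem_univ, true_and] at hi ⊢
    have := hx.monotone hab
    linarith
  have hU'anti : Antitone U' := by
    intro a b hab
    apply Finset.card_le_card
    intro i hi
    simp only [Finset.mem_filter, Finset.mem_univ, true_and] at hi ⊢
    have := hx'.monotone hab
    linarith
  have hUU' : U = U' := by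
    apply antitone_perm_eq U U' hUanti hU'anti σ
    intro j
    show (Finset.univ.filter (fun i => x j + 1 < x i)).card
      = (Finset.univ.filter (fun i => x' (σ j) + 1 < x' i)).card
    rw [← card_filter_perm σ (fun i => x' (σ j) + 1 < x' i)]
    congr 1
    apply Finset.filter_congr
    intro i _
    simpa using hiso j i
  apply List.ext_getElem (by omega)
  intro k hk1 hk2
  have hkL : k < L.length := by omega
  have hkL' : k < L'.length := by omega
  rw [← List.getD_eq_getElem w false hk1, ← List.getD_eq_getElem w' false hk2]
  have h1 := hw k hkL
  have h2 := hw' k hkL'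
  rw [List.getD_eq_getElem L 0 hkL] at h1
  rw [List.getD_eq_getElem L' 0 hkL'] at h2
  have hEiff := e_pos_iff x hx hdisj hsort hperm hkL
  have hEiff' := e_pos_iff x' hx' hdisj' hsort' hperm' hkL'
  by_cases hE : ∃ j : Fin n, k = (n - U j) + ↑j
  · have hb : w.getD k false = false := by
      rw [Bool.eq_false_iff, Ne, h1]
      rintro ⟨i, hi⟩
      obtain ⟨j, hj⟩ := hEiff.mpr hE
      exact hdisj j i (by rw [hj, hi])
    have hb' : w'.getD k false = false := by
      rw [Bool.eq_false_iff, Ne, h2]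
      rintro ⟨i, hi⟩
      have hE' : ∃ j : Fin n, k = (n - U' j) + ↑j := by rw [← hUU']; exact hE
      obtain ⟨j, hj⟩ := hEiff'.mpr hE'
      exact hdisj' j i (by rw [hj, hi])
    rw [hb, hb']
  · have hm : L[k] ∈ List.ofFn x ++ List.ofFn (fun i => x i + 1) :=
      hperm.mem_iff.mp (List.getElem_mem hkL)
    have hm' : L'[k] ∈ List.ofFn x' ++ List.ofFn (fun i => x' i + 1) :=
      hperm'.mem_iff.mp (List.getElem_mem hkL')
    have hb : w.getD k false = true := by
      rw [h1]
      rcases List.mem_append.mp hm with h | h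
      · exact List.mem_ofFn.mp h
      · exact absurd (hEiff.mp (List.mem_ofFn.mp h)) hE
    have hb' : w'.getD k false = true := by
      rw [h2]
      rcases List.mem_append.mp hm' with h | h
      · exact List.mem_ofFn.mp h
      · have hE2 : ∃ j : Fin n, k = (n - U' j) + ↑j :=
          hEiff'.mp (List.mem_ofFn.mp h)
        have hE3 : ∃ j : Fin n, k = (n - U j) + ↑j := by rw [hUU']; exact hE2
        exact absurd hE3 hE
    rw [hb, hb']
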